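/- Let k ≥ 3 and let F be a family of 'thin' subsets of [k] × [k] (each set contains at most one element per row). Suppose there exists X ⊆ [k] × [k] containing exactly one element from each row i ∈ [k] such that X ∩ F ≠ ∅ for every F ∈ F. Then there is a permutation σ of [2k+1] such that: σ orders k+1, k+2, …, 2k+1 increasingly; σ places each i ∈ [k] between σ(k+1) and σ(2k+1); and for every F ∈ F there exists (i,j) ∈ F with σ(k+j) < σ(i) < σ(k+j+1). Conversely, the existence of such a permutation implies the existence of such a hitting set X. -/

import Mathlib

/-- The element of `Fin (2k+1)` with value `m` (for `m ≤ 2k`). -/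
def pos (k m : ℕ) : Fin (2 * k + 1) := ⟨m % (2 * k + 1), Nat.mod_lt _ (Nat.succ_pos _)⟩

/-- The embedding of a row index `i ∈ [k]` into `Fin (2k+1)`. -/
def rowIdx (k : ℕ) (i : Fin k) : Fin (2 * k + 1) := Fin.castLE (by omega) i

lemma decompAux {n a b c d : ℕ} (ha : a < n) (hb : b < n) (h : a + c * n = b + d * n) :
    a = b ∧ c = d := by
  have h1 : a = b := by
    have h2 := congrArg (· % n) h
    simpa [Nat.add_mul_mod_self_right, Nat.mod_eq_of_lt ha, Nat.mod_eq_of_lt hb] using h2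
  refine ⟨h1, ?_⟩
  have h3 : c * n = d * n := by omega
  exact Nat.eq_of_mul_eq_mul_right (by omega) h3

/-- Key function encoding rows and walls into naturals. -/
def keyF (k : ℕ) (X : Fin k → Fin k) (x : Fin (2 * k + 1)) : ℕ :=
  if h : x.val < k then (1 + x.val) + (X ⟨x.val, h⟩).val * (k + 1)
  else 0 + (x.val - k) * (k + 1)

/-- Correctness of the reduction from `k×k` Hitting Set with thin sets to permutation
constraints: a hitting set picking one element per row exists iff there is a permutation
`σ` of `[2k+1]` (0-based: `Fin (2k+1)`) ordering the last `k+1` positions increasingly,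
placing each row index between the first and last of them, and such that for each set
`S ∈ F` some `(i,j) ∈ S` has `i` placed between positions `k+j` and `k+j+1`. -/
theorem hittingSet_iff_permutation (k : ℕ) (hk : 3 ≤ k)
    (F : Finset (Finset (Fin k × Fin k)))
    (hthin : ∀ S ∈ F, ∀ i j j' : Fin k, (i, j) ∈ S → (i, j') ∈ S → j = j') :
    (∃ X : Fin k → Fin k, ∀ S ∈ F, ∃ i : Fin k, (i, X i) ∈ S) ↔
    (∃ σ : Equiv.Perm (Fin (2 * k + 1)),
      (∀ m1 m2 : ℕ, k ≤ m1 → m1 < m2 → m2 ≤ 2 * k → σ (pos k m1) < σ (pos k m2)) ∧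
      (∀ i : Fin k, σ (pos k k) < σ (rowIdx k i) ∧ σ (rowIdx k i) < σ (pos k (2 * k))) ∧
      (∀ S ∈ F, ∃ i j : Fin k, (i, j) ∈ S ∧
        σ (pos k (k + j.val)) < σ (rowIdx k i) ∧
        σ (rowIdx k i) < σ (pos k (k + j.val + 1)))) := by
  have hposval : ∀ m, m ≤ 2 * k → (pos k m).val = m := fun m hm => Nat.mod_eq_of_lt (by omega)
  have hrowval : ∀ i : Fin k, (rowIdx k i).val = i.val := fun i => rfl
  constructor
  · rintro ⟨X, hX⟩
    have hinj : Function.Injective (keyF k X) := by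
      intro x y h
      unfold keyF at h
      split_ifs at h with hx hy hy
      · obtain ⟨h1, -⟩ := decompAux (n := k + 1) (by omega) (by omega) h
        exact Fin.ext (by omega)
      · obtain ⟨h1, -⟩ := decompAux (n := k + 1) (by omega) (by omega) h
        omega
      · obtain ⟨h1, -⟩ := decompAux (n := k + 1) (by omega) (by omega) h
        omega
      · obtain ⟨-, h2⟩ := decompAux (n := k + 1) (by omega) (by omega) h
        exact Fin.ext (by omega)
    set s : Finset ℕ := Finset.univ.image (keyF k X) with hs
    have hcard : s.card = 2 * k + 1 := by
      rw [hs, Finset.card_image_of_injective _ hinj, Finset.card_univ, Fintype.card_fin]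
    have hmem : ∀ x, keyF k X x ∈ s := fun x => Finset.mem_image_of_mem _ (Finset.mem_univ x)
    have hbij : Function.Bijective (fun x => (⟨keyF k X x, hmem x⟩ : s)) := by
      rw [Fintype.bijective_iff_injective_and_card]
      constructor
      · intro x y hxy; exact hinj (congrArg Subtype.val hxy)
      · simp [Fintype.card_coe, hcard]
    set iso := s.orderIsoOfFin hcard with hiso
    set σ : Equiv.Perm (Fin (2 * k + 1)) :=
      (Equiv.ofBijective _ hbij).trans iso.symm.toEquiv with hσ
    have hcmp : ∀ x y, σ x < σ y ↔ keyF k X x < keyF k X y := by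
      intro x y
      simp only [hσ, Equiv.trans_apply, Equiv.ofBijective_apply, OrderIso.toEquiv_symm,
        RelIso.coe_fn_toEquiv]
      refine (iso.symm.lt_iff_lt).trans ?_
      exact Iff.rfl
    have hkeywall : ∀ m, k ≤ m → m ≤ 2 * k → keyF k X (pos k m) = (m - k) * (k + 1) := by
      intro m h1 h2
      unfold keyF
      rw [dif_neg (by rw [hposval m h2]; omega)]
      rw [hposval m h2, Nat.zero_add]
    have hkeyrow : ∀ i : Fin k, keyF k X (rowIdx k i) = (1 + i.val) + (X i).val * (k + 1) := by
      intro i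
      unfold keyF
      rw [dif_pos (by rw [hrowval i]; exact i.isLt)]
      congr 1
    refine ⟨σ, ?_, ?_, ?_⟩
    · intro m1 m2 h1 h2 h3
      rw [hcmp, hkeywall m1 h1 (by omega), hkeywall m2 (by omega) h3]
      exact Nat.mul_lt_mul_of_lt_of_le (by omega) (le_refl _) (by omega)
    · intro i
      constructor
      · rw [hcmp, hkeywall k (le_refl _) (by omega), hkeyrow i]
        simp
      · rw [hcmp, hkeyrow i, hkeywall (2 * k) (by omega) (le_refl _)]
        have h1 : (1 + i.val) + (X i).val * (k + 1) < ((X i).val + 1) * (k + 1) := by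
          have := i.isLt; nlinarith
        have h2 : ((X i).val + 1) * (k + 1) ≤ k * (k + 1) :=
          Nat.mul_le_mul_right _ (by have := (X i).isLt; omega)
        calc (1 + i.val) + (X i).val * (k + 1) < ((X i).val + 1) * (k + 1) := h1
          _ ≤ k * (k + 1) := h2
          _ = (2 * k - k) * (k + 1) := by congr 1; omega
    · intro S hS
      obtain ⟨i, hi⟩ := hX S hS
      refine ⟨i, X i, hi, ?_, ?_⟩
      · rw [hcmp, hkeywall (k + (X i).val) (by omega) (by have := (X i).isLt; omega), hkeyrow i]
        have : k + (X i).val - k = (X i).val := by omega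
        rw [this]
        omega
      · rw [hcmp, hkeyrow i, hkeywall (k + (X i).val + 1) (by omega)
          (by have := (X i).isLt; omega)]
        have h0 : k + (X i).val + 1 - k = (X i).val + 1 := by omega
        rw [h0]
        have := i.isLt; nlinarith
  · rintro ⟨σ, h1, h2, h3⟩
    classical
    have huniq : ∀ (i : Fin k) (j1 j2 : Fin k),
        (σ (pos k (k + j1.val)) < σ (rowIdx k i) ∧ σ (rowIdx k i) < σ (pos k (k + j1.val + 1))) →
        (σ (pos k (k + j2.val)) < σ (rowIdx k i) ∧ σ (rowIdx k i) < σ (pos k (k + j2.val + 1))) →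
        j1 = j2 := by
      have key : ∀ (i : Fin k) (j1 j2 : Fin k), j1.val < j2.val →
          (σ (pos k (k + j1.val)) < σ (rowIdx k i) ∧ σ (rowIdx k i) < σ (pos k (k + j1.val + 1))) →
          (σ (pos k (k + j2.val)) < σ (rowIdx k i) ∧ σ (rowIdx k i) < σ (pos k (k + j2.val + 1))) →
          False := by
        intro i j1 j2 hlt ⟨ha1, ha2⟩ ⟨hb1, hb2⟩
        have hj2 := j2.isLt
        rcases Nat.lt_or_ge (k + j1.val + 1) (k + j2.val) with h | h
        · have := h1 (k + j1.val + 1) (k + j2.val) (by omega) h (by omega)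
          exact absurd (lt_trans (lt_trans ha2 this) hb1) (lt_irrefl _)
        · have heq : k + j1.val + 1 = k + j2.val := by omega
          rw [heq] at ha2
          exact absurd (lt_trans ha2 hb1) (lt_irrefl _)
      intro i j1 j2 hp1 hp2
      rcases Nat.lt_trichotomy j1.val j2.val with h | h | h
      · exact absurd (key i j1 j2 h hp1 hp2) (fun x => x)
      · exact Fin.ext h
      · exact absurd (key i j2 j1 h hp2 hp1) (fun x => x)
    set X : Fin k → Fin k := fun i =>
      if h : ∃ j : Fin k, σ (pos k (k + j.val)) < σ (rowIdx k i) ∧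
          σ (rowIdx k i) < σ (pos k (k + j.val + 1)) then h.choose else ⟨0, by omega⟩ with hXdef
    refine ⟨X, ?_⟩
    intro S hS
    obtain ⟨i, j, hij, hc1, hc2⟩ := h3 S hS
    refine ⟨i, ?_⟩
    have hex : ∃ j : Fin k, σ (pos k (k + j.val)) < σ (rowIdx k i) ∧
        σ (rowIdx k i) < σ (pos k (k + j.val + 1)) := ⟨j, hc1, hc2⟩
    have hXi : X i = hex.choose := by rw [hXdef]; exact dif_pos hex
    have : hex.choose = j := huniq i hex.choose j hex.choose_spec ⟨hc1, hc2⟩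
    rw [hXi, this]
    exact hij
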